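/- Let n ≥ 3, let W be a four-linear form on ℝⁿ with the symmetries of a Weyl tensor, and let h_{ij}(x) = (1/3)∑_{p,q=1}^n W_{ipjq} x_p x_q. Then for all k, l ∈ {1,…,n}: ∫_{𝕊^{n−1}} ∑_{p=1}^n h_{kp}(x) h_{pl}(x) dσ(x) = (ω_{n−1}/(18n(n+2))) T_{kl}, where the integral is over the unit sphere 𝕊^{n−1} ⊂ ℝⁿ with its canonical measure σ and ω_{n−1} = σ(𝕊^{n−1}). -/

import Mathlib

open MeasureTheory Real

noncomputable section

/-- The Euclidean space `ℝⁿ`. -/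
abbrev En (n : ℕ) := EuclideanSpace ℝ (Fin n)

/-- `W` has the symmetries of a Weyl tensor. -/
def IsWeyl (n : ℕ) (W : Fin n → Fin n → Fin n → Fin n → ℝ) : Prop :=
  (∀ i j k l, W i j k l = -W j i k l) ∧
  (∀ i j k l, W i j k l = -W i j l k) ∧
  (∀ i j k l, W i j k l = W k l i j) ∧
  (∀ j l, ∑ i, W i j i l = 0) ∧
  (∀ i j k l, W i j k l + W j k i l + W k i j l = 0)

/-- `T_{kl} = ∑_{p,q,r} (W_{kpqr}+W_{krqp})(W_{lpqr}+W_{lrqp})`. -/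
def Tkl (n : ℕ) (W : Fin n → Fin n → Fin n → Fin n → ℝ) (k l : Fin n) : ℝ :=
  ∑ p, ∑ q, ∑ r, (W k p q r + W k r q p) * (W l p q r + W l r q p)

/-- The quadratic field associated to `W`: `h_{ij}(x) = (1/3)∑_{p,q} W_{ipjq} x_p x_q`. -/
noncomputable def hW (n : ℕ) (W : Fin n → Fin n → Fin n → Fin n → ℝ)
    (x : En n) (i j : Fin n) : ℝ :=
  (1 / 3) * ∑ p, ∑ q, W i p j q * x p * x q

/-- The canonical surface measure on the unit sphere `𝕊^{n-1} ⊂ ℝⁿ`. -/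
noncomputable def sphereMeasure (n : ℕ) :
    Measure (Metric.sphere (0 : En n) 1) :=
  (volume : Measure (En n)).toSphere

/-- `ω_{n-1}`, the total canonical measure of the unit sphere `𝕊^{n-1} ⊂ ℝⁿ`. -/
noncomputable def omegaSphere (n : ℕ) : ℝ := (sphereMeasure n Set.univ).toReal


open Metric Set
open scoped Pointwise

variable {n : ℕ}

/-- map induced on the sphere by a linear isometry -/
def sphMap (f : En n ≃ₗᵢ[ℝ] En n) (x : Metric.sphere (0 : En n) 1) :
    Metric.sphere (0 : En n) 1 :=
  ⟨f x, by
    have hx : ‖(x : En n)‖ = 1 := by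
      simpa [mem_sphere_iff_norm] using x.2
    simp [mem_sphere_iff_norm, f.norm_map, hx]⟩

lemma continuous_sphMap (f : En n ≃ₗᵢ[ℝ] En n) : Continuous (sphMap f) :=
  Continuous.subtype_mk (f.continuous.comp continuous_subtype_val) _

lemma measurePreserving_sphMap (f : En n ≃ₗᵢ[ℝ] En n) :
    MeasurePreserving (sphMap f) (sphereMeasure n) (sphereMeasure n) := by
  refine ⟨(continuous_sphMap f).measurable, ?_⟩
  ext s hs
  rw [Measure.map_apply (continuous_sphMap f).measurable hs]
  have hps : MeasurableSet (sphMap f ⁻¹' s) := (continuous_sphMap f).measurable hs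
  rw [sphereMeasure, Measure.toSphere_apply' _ hps, Measure.toSphere_apply' _ hs]
  have himg : (Subtype.val '' (sphMap f ⁻¹' s) : Set (En n)) = f ⁻¹' (Subtype.val '' s) := by
    ext y
    constructor
    · rintro ⟨x, hx, rfl⟩
      exact ⟨sphMap f x, hx, rfl⟩
    · rintro ⟨z, hz, hfz⟩
      have hy : y ∈ Metric.sphere (0 : En n) 1 := by
        have : ‖f y‖ = 1 := by
          rw [← hfz]
          simpa [mem_sphere_iff_norm] using z.2
        simpa [mem_sphere_iff_norm, f.norm_map] using this
      refine ⟨⟨y, hy⟩, ?_, rfl⟩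
      have h2 : sphMap f ⟨y, hy⟩ = z := Subtype.ext hfz.symm
      show sphMap f ⟨y, hy⟩ ∈ s
      rw [h2]; exact hz
  rw [himg]
  have hsmul : (Ioo (0:ℝ) 1 • (f ⁻¹' (Subtype.val '' s)) : Set (En n))
      = f ⁻¹' (Ioo (0:ℝ) 1 • (Subtype.val '' s)) := by
    ext y
    simp only [Set.mem_smul, Set.mem_preimage]
    constructor
    · rintro ⟨c, hc, a, ha, rfl⟩
      exact ⟨c, hc, f a, ha, by simp [f.map_smul]⟩
    · rintro ⟨c, hc, a, ha, hca⟩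
      refine ⟨c, hc, f.symm a, by simpa using ha, ?_⟩
      apply f.injective
      simp [f.map_smul, hca]
  rw [hsmul]
  congr 1
  have hmp : MeasurePreserving (f.toHomeomorph.toMeasurableEquiv)
      (volume : Measure (En n)) volume := f.measurePreserving
  exact hmp.measure_preimage_equiv _

lemma integral_comp_sphMap (f : En n ≃ₗᵢ[ℝ] En n) (g : Metric.sphere (0 : En n) 1 → ℝ) :
    ∫ x, g (sphMap f x) ∂(sphereMeasure n) = ∫ x, g x ∂(sphereMeasure n) := by
  -- sphMap f as a measurable equiv
  have hcont' : Continuous (sphMap f.symm) := continuous_sphMap f.symm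
  have hinv : Function.LeftInverse (sphMap f.symm) (sphMap f) := by
    intro x; apply Subtype.ext; simp [sphMap]
  have hinv' : Function.RightInverse (sphMap f.symm) (sphMap f) := by
    intro x; apply Subtype.ext; simp [sphMap]
  let e : Metric.sphere (0 : En n) 1 ≃ᵐ Metric.sphere (0 : En n) 1 :=
    Homeomorph.toMeasurableEquiv
      { toFun := sphMap f, invFun := sphMap f.symm,
        left_inv := hinv, right_inv := hinv',
        continuous_toFun := continuous_sphMap f, continuous_invFun := hcont' }
  exact (measurePreserving_sphMap f).integral_comp e.measurableEmbedding g

variable {n : ℕ}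

/-- sign flip at coordinate a -/
def flipFun (a : Fin n) (x : En n) : En n := WithLp.toLp 2 (fun i => if i = a then -(x i) else x i)

lemma flipFun_invol (a : Fin n) (x : En n) : flipFun a (flipFun a x) = x := by
  ext i; by_cases h : i = a <;> simp [flipFun, h]

def flipIso (a : Fin n) : En n ≃ₗᵢ[ℝ] En n where
  toLinearEquiv :=
    { toFun := flipFun a
      invFun := flipFun a
      left_inv := flipFun_invol a
      right_inv := flipFun_invol a
      map_add' := by
        intro x y; ext i; by_cases h : i = a <;>
          simp [flipFun, h, PiLp.add_apply] <;> ring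
      map_smul' := by
        intro c x; ext i; by_cases h : i = a <;>
          simp [flipFun, h, PiLp.smul_apply, smul_eq_mul] <;> ring }
  norm_map' := by
    intro x
    rw [EuclideanSpace.norm_eq, EuclideanSpace.norm_eq]
    congr 1
    refine Finset.sum_congr rfl fun i _ => ?_
    by_cases h : i = a <;> simp [flipFun, h]

lemma flipIso_apply (a i : Fin n) (x : En n) :
    flipIso a x i = if i = a then -(x i) else x i := rfl

/-- "45 degree rotation" (in fact a reflection) in the (a,b) plane -/
def rotFun (a b : Fin n) (x : En n) : En n := WithLp.toLp 2 (fun i =>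
  if i = a then (x a + x b) / Real.sqrt 2
  else if i = b then (x a - x b) / Real.sqrt 2
  else x i)

lemma sqrt2_ne : (Real.sqrt 2) ≠ 0 := by positivity

lemma sqrt2_sq : Real.sqrt 2 * Real.sqrt 2 = 2 := Real.mul_self_sqrt (by norm_num)



lemma key_a (u v : ℝ) : ((u + v) / Real.sqrt 2 + (u - v) / Real.sqrt 2) / Real.sqrt 2 = u := by
  have h2 := sqrt2_sq
  have h0 := sqrt2_ne
  field_simp
  rw [sq, h2]; ring

lemma key_b (u v : ℝ) : ((u + v) / Real.sqrt 2 - (u - v) / Real.sqrt 2) / Real.sqrt 2 = v := by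
  have h2 := sqrt2_sq
  have h0 := sqrt2_ne
  field_simp
  rw [sq, h2]; ring

lemma key_sq (u v : ℝ) :
    ((u + v) / Real.sqrt 2) ^ 2 + ((u - v) / Real.sqrt 2) ^ 2 = u ^ 2 + v ^ 2 := by
  have h2 : Real.sqrt 2 ^ 2 = 2 := Real.sq_sqrt (by norm_num)
  rw [div_pow, div_pow, h2]
  ring

lemma rotFun_a (a b : Fin n) (x : En n) : rotFun a b x a = (x a + x b) / Real.sqrt 2 := by
  simp [rotFun]

lemma rotFun_b (a b : Fin n) (hab : a ≠ b) (x : En n) :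
    rotFun a b x b = (x a - x b) / Real.sqrt 2 := by
  simp [rotFun, hab.symm]

lemma rotFun_other (a b : Fin n) {i : Fin n} (hia : i ≠ a) (hib : i ≠ b) (x : En n) :
    rotFun a b x i = x i := by
  simp [rotFun, hia, hib]

lemma rotFun_invol (a b : Fin n) (hab : a ≠ b) (x : En n) :
    rotFun a b (rotFun a b x) = x := by
  ext i
  by_cases h : i = a
  · rw [h, rotFun_a, rotFun_a, rotFun_b a b hab]
    exact key_a _ _
  · by_cases h' : i = b
    · rw [h', rotFun_b a b hab, rotFun_a, rotFun_b a b hab]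
      exact key_b _ _
    · rw [rotFun_other a b h h', rotFun_other a b h h']

lemma sum_split (a b : Fin n) (hab : a ≠ b) (F : Fin n → ℝ) :
    ∑ i, F i = F a + F b + ∑ i ∈ (Finset.univ.erase a).erase b, F i := by
  have hb : b ∈ Finset.univ.erase a := Finset.mem_erase.2 ⟨hab.symm, Finset.mem_univ b⟩
  rw [← Finset.add_sum_erase _ F (Finset.mem_univ a), ← Finset.add_sum_erase _ F hb, add_assoc]

lemma rotFun_norm (a b : Fin n) (hab : a ≠ b) (x : En n) :
    ∑ i, ‖rotFun a b x i‖ ^ 2 = ∑ i, ‖x i‖ ^ 2 := by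
  rw [sum_split a b hab, sum_split a b hab (fun i => ‖x i‖ ^ 2)]
  have htail : ∑ i ∈ (Finset.univ.erase a).erase b, ‖rotFun a b x i‖ ^ 2
      = ∑ i ∈ (Finset.univ.erase a).erase b, ‖x i‖ ^ 2 := by
    refine Finset.sum_congr rfl fun i hi => ?_
    obtain ⟨hib, hia⟩ := Finset.mem_erase.1 hi
    have hia' := (Finset.mem_erase.1 hia).1
    rw [rotFun_other a b hia' hib]
  rw [htail]
  congr 1
  rw [rotFun_a, rotFun_b a b hab]
  simp only [Real.norm_eq_abs, sq_abs]
  exact key_sq _ _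

def rotIso (a b : Fin n) (hab : a ≠ b) : En n ≃ₗᵢ[ℝ] En n where
  toLinearEquiv :=
    { toFun := rotFun a b
      invFun := rotFun a b
      left_inv := rotFun_invol a b hab
      right_inv := rotFun_invol a b hab
      map_add' := by
        intro x y; ext i
        simp only [rotFun, PiLp.add_apply, PiLp.toLp_apply]
        split_ifs <;> ring
      map_smul' := by
        intro c x; ext i
        simp only [rotFun, PiLp.toLp_apply, PiLp.smul_apply, smul_eq_mul, RingHom.id_apply]
        split_ifs <;> ring }
  norm_map' := by
    intro x
    rw [EuclideanSpace.norm_eq, EuclideanSpace.norm_eq]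
    exact congrArg Real.sqrt (rotFun_norm a b hab x)

lemma rotIso_apply_a (a b : Fin n) (hab : a ≠ b) (x : En n) :
    rotIso a b hab x a = (x a + x b) / Real.sqrt 2 := rotFun_a a b x

lemma rotIso_apply_b (a b : Fin n) (hab : a ≠ b) (x : En n) :
    rotIso a b hab x b = (x a - x b) / Real.sqrt 2 := rotFun_b a b hab x

/-! ## Moments -/

instance (n : ℕ) : IsFiniteMeasure (sphereMeasure n) := by
  unfold sphereMeasure; infer_instance

def X {n : ℕ} (x : Metric.sphere (0 : En n) 1) (i : Fin n) : ℝ := (x : En n) i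

lemma continuous_X {n : ℕ} (i : Fin n) : Continuous fun x : Metric.sphere (0 : En n) 1 => X x i := by
  exact ((continuous_apply i).comp (PiLp.continuous_ofLp 2 _)).comp continuous_subtype_val

lemma integrable_cont {n : ℕ} (g : Metric.sphere (0 : En n) 1 → ℝ) (hg : Continuous g) :
    Integrable g (sphereMeasure n) :=
  hg.integrable_of_hasCompactSupport (HasCompactSupport.of_compactSpace _)

def Mo (n : ℕ) (a b c d : Fin n) : ℝ :=
  ∫ x, X x a * X x b * X x c * X x d ∂(sphereMeasure n)

lemma integrable_mono {n : ℕ} (a b c d : Fin n) :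
    Integrable (fun x : Metric.sphere (0 : En n) 1 => X x a * X x b * X x c * X x d)
      (sphereMeasure n) :=
  integrable_cont _ ((((continuous_X a).mul (continuous_X b)).mul (continuous_X c)).mul
    (continuous_X d))

lemma Mo_congr {n : ℕ} {a b c d a' b' c' d' : Fin n}
    (h : ∀ x : Metric.sphere (0 : En n) 1,
      X x a * X x b * X x c * X x d = X x a' * X x b' * X x c' * X x d') :
    Mo n a b c d = Mo n a' b' c' d' := by
  unfold Mo; exact congrArg _ (funext h)

lemma X_sphMap {n : ℕ} (f : En n ≃ₗᵢ[ℝ] En n) (x : Metric.sphere (0 : En n) 1) (i : Fin n) :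
    X (sphMap f x) i = f (x : En n) i := rfl

lemma X_flip {n : ℕ} (a : Fin n) (x : Metric.sphere (0 : En n) 1) (i : Fin n) :
    X (sphMap (flipIso a) x) i = if i = a then -(X x i) else X x i := rfl

lemma Mo_odd {n : ℕ} (a b c d : Fin n) (h1 : a ≠ b) (h2 : a ≠ c) (h3 : a ≠ d) :
    Mo n a b c d = 0 := by
  have key := integral_comp_sphMap (flipIso a)
    (fun x : Metric.sphere (0 : En n) 1 => X x a * X x b * X x c * X x d)
  have hpt : (fun x : Metric.sphere (0 : En n) 1 =>
      X (sphMap (flipIso a) x) a * X (sphMap (flipIso a) x) b *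
        X (sphMap (flipIso a) x) c * X (sphMap (flipIso a) x) d)
      = fun x => -(X x a * X x b * X x c * X x d) := by
    funext x
    rw [X_flip, X_flip, X_flip, X_flip, if_pos rfl, if_neg (fun h => h1 h.symm),
      if_neg (fun h => h2 h.symm), if_neg (fun h => h3 h.symm)]
    ring
  rw [hpt] at key
  rw [integral_neg] at key
  have : Mo n a b c d = ∫ x, X x a * X x b * X x c * X x d ∂(sphereMeasure n) := rfl
  rw [this]
  linarith [key]

lemma X_rot_a {n : ℕ} (a b : Fin n) (hab : a ≠ b) (x : Metric.sphere (0 : En n) 1) :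
    X (sphMap (rotIso a b hab) x) a = (X x a + X x b) / Real.sqrt 2 :=
  rotFun_a a b _

lemma X_rot_b {n : ℕ} (a b : Fin n) (hab : a ≠ b) (x : Metric.sphere (0 : En n) 1) :
    X (sphMap (rotIso a b hab) x) b = (X x a - X x b) / Real.sqrt 2 :=
  rotFun_b a b hab _

lemma quart_plus (u v : ℝ) :
    ((u + v) / Real.sqrt 2) * ((u + v) / Real.sqrt 2) * ((u + v) / Real.sqrt 2) *
      ((u + v) / Real.sqrt 2)
    = (1/4) * (u*u*u*u) + 1 * (u*u*u*v) + (3/2) * (u*u*v*v) + 1 * (u*v*v*v)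
      + (1/4) * (v*v*v*v) := by
  have ht : ((u + v) / Real.sqrt 2) * ((u + v) / Real.sqrt 2) = (u + v) ^ 2 / 2 := by
    rw [div_mul_div_comm, sqrt2_sq]; ring_nf
  calc ((u + v) / Real.sqrt 2) * ((u + v) / Real.sqrt 2) * ((u + v) / Real.sqrt 2) *
      ((u + v) / Real.sqrt 2)
      = (((u + v) / Real.sqrt 2) * ((u + v) / Real.sqrt 2)) *
        (((u + v) / Real.sqrt 2) * ((u + v) / Real.sqrt 2)) := by ring
    _ = ((u + v) ^ 2 / 2) * ((u + v) ^ 2 / 2) := by rw [ht]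
    _ = _ := by ring

lemma quart_minus (u v : ℝ) :
    ((u - v) / Real.sqrt 2) * ((u - v) / Real.sqrt 2) * ((u - v) / Real.sqrt 2) *
      ((u - v) / Real.sqrt 2)
    = (1/4) * (u*u*u*u) + (-1) * (u*u*u*v) + (3/2) * (u*u*v*v) + (-1) * (u*v*v*v)
      + (1/4) * (v*v*v*v) := by
  have ht : ((u - v) / Real.sqrt 2) * ((u - v) / Real.sqrt 2) = (u - v) ^ 2 / 2 := by
    rw [div_mul_div_comm, sqrt2_sq]; ring_nf
  calc ((u - v) / Real.sqrt 2) * ((u - v) / Real.sqrt 2) * ((u - v) / Real.sqrt 2) *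
      ((u - v) / Real.sqrt 2)
      = (((u - v) / Real.sqrt 2) * ((u - v) / Real.sqrt 2)) *
        (((u - v) / Real.sqrt 2) * ((u - v) / Real.sqrt 2)) := by ring
    _ = ((u - v) ^ 2 / 2) * ((u - v) ^ 2 / 2) := by rw [ht]
    _ = _ := by ring

lemma integral_five {n : ℕ} (c1 c2 c3 c4 c5 : ℝ)
    (f1 f2 f3 f4 f5 : Metric.sphere (0 : En n) 1 → ℝ)
    (h1 : Integrable f1 (sphereMeasure n)) (h2 : Integrable f2 (sphereMeasure n))
    (h3 : Integrable f3 (sphereMeasure n)) (h4 : Integrable f4 (sphereMeasure n))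
    (h5 : Integrable f5 (sphereMeasure n)) :
    ∫ x, (c1 * f1 x + c2 * f2 x + c3 * f3 x + c4 * f4 x + c5 * f5 x) ∂(sphereMeasure n)
      = c1 * (∫ x, f1 x ∂(sphereMeasure n)) + c2 * (∫ x, f2 x ∂(sphereMeasure n))
        + c3 * (∫ x, f3 x ∂(sphereMeasure n)) + c4 * (∫ x, f4 x ∂(sphereMeasure n))
        + c5 * (∫ x, f5 x ∂(sphereMeasure n)) := by
  have i2 : Integrable (fun x => c1 * f1 x + c2 * f2 x) (sphereMeasure n) :=
    (h1.const_mul c1).add (h2.const_mul c2)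
  have i3 : Integrable (fun x => c1 * f1 x + c2 * f2 x + c3 * f3 x) (sphereMeasure n) :=
    i2.add (h3.const_mul c3)
  have i4 : Integrable (fun x => c1 * f1 x + c2 * f2 x + c3 * f3 x + c4 * f4 x)
      (sphereMeasure n) := i3.add (h4.const_mul c4)
  rw [integral_add i4 (h5.const_mul c5), integral_add i3 (h4.const_mul c4),
    integral_add i2 (h3.const_mul c3), integral_add (h1.const_mul c1) (h2.const_mul c2),
    integral_const_mul, integral_const_mul, integral_const_mul, integral_const_mul,
    integral_const_mul]

lemma Mo_rot_rel {n : ℕ} (a b : Fin n) (hab : a ≠ b) :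
    Mo n a a a a = Mo n b b b b ∧ Mo n a a a a = 3 * Mo n a a b b := by
  have hodd1 : Mo n a a a b = 0 := by
    rw [Mo_congr (a' := b) (b' := a) (c' := a) (d' := a) (fun x => by ring)]
    exact Mo_odd b a a a (fun h => hab h.symm) (fun h => hab h.symm) (fun h => hab h.symm)
  have hodd2 : Mo n a b b b = 0 := Mo_odd a b b b hab hab hab
  have key1 := integral_comp_sphMap (rotIso a b hab)
    (fun x : Metric.sphere (0 : En n) 1 => X x a * X x a * X x a * X x a)
  have key2 := integral_comp_sphMap (rotIso a b hab)
    (fun x : Metric.sphere (0 : En n) 1 => X x b * X x b * X x b * X x b)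
  have hpt1 : (fun x : Metric.sphere (0 : En n) 1 =>
        X (sphMap (rotIso a b hab) x) a * X (sphMap (rotIso a b hab) x) a *
          X (sphMap (rotIso a b hab) x) a * X (sphMap (rotIso a b hab) x) a)
      = fun x => (1/4) * (X x a * X x a * X x a * X x a)
          + 1 * (X x a * X x a * X x a * X x b)
          + (3/2) * (X x a * X x a * X x b * X x b)
          + 1 * (X x a * X x b * X x b * X x b)
          + (1/4) * (X x b * X x b * X x b * X x b) := by
    funext x
    rw [X_rot_a a b hab]
    exact quart_plus _ _
  have hpt2 : (fun x : Metric.sphere (0 : En n) 1 =>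
        X (sphMap (rotIso a b hab) x) b * X (sphMap (rotIso a b hab) x) b *
          X (sphMap (rotIso a b hab) x) b * X (sphMap (rotIso a b hab) x) b)
      = fun x => (1/4) * (X x a * X x a * X x a * X x a)
          + (-1) * (X x a * X x a * X x a * X x b)
          + (3/2) * (X x a * X x a * X x b * X x b)
          + (-1) * (X x a * X x b * X x b * X x b)
          + (1/4) * (X x b * X x b * X x b * X x b) := by
    funext x
    rw [X_rot_b a b hab]
    exact quart_minus _ _
  rw [hpt1, integral_five _ _ _ _ _ _ _ _ _ _ (integrable_mono a a a a)
    (integrable_mono a a a b) (integrable_mono a a b b) (integrable_mono a b b b)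
    (integrable_mono b b b b)] at key1
  rw [hpt2, integral_five _ _ _ _ _ _ _ _ _ _ (integrable_mono a a a a)
    (integrable_mono a a a b) (integrable_mono a a b b) (integrable_mono a b b b)
    (integrable_mono b b b b)] at key2
  have e1 : Mo n a a a a = (1/4) * Mo n a a a a + 1 * Mo n a a a b + (3/2) * Mo n a a b b
      + 1 * Mo n a b b b + (1/4) * Mo n b b b b := key1.symm
  have e2 : Mo n b b b b = (1/4) * Mo n a a a a + (-1) * Mo n a a a b + (3/2) * Mo n a a b b
      + (-1) * Mo n a b b b + (1/4) * Mo n b b b b := key2.symm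
  rw [hodd1, hodd2] at e1 e2
  constructor <;> linarith

lemma sum_sq_X {n : ℕ} (x : Metric.sphere (0 : En n) 1) : ∑ i, X x i * X x i = 1 := by
  have hx : ‖(x : En n)‖ = 1 := by simpa using x.2
  rw [EuclideanSpace.norm_eq] at hx
  have h1 : ∑ i, ‖(x : En n) i‖ ^ 2 = 1 := by
    have := Real.sqrt_eq_one.mp hx
    exact this
  calc ∑ i, X x i * X x i = ∑ i, ‖(x : En n) i‖ ^ 2 := by
        refine Finset.sum_congr rfl fun i _ => ?_
        rw [Real.norm_eq_abs, sq_abs, sq]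
        rfl
    _ = 1 := h1

lemma trace_Mo {n : ℕ} : ∑ a, ∑ b, Mo n a a b b = omegaSphere n := by
  have hin : ∀ a : Fin n, ∑ b, Mo n a a b b
      = ∫ x, ∑ b, X x a * X x a * X x b * X x b ∂(sphereMeasure n) :=
    fun a => (integral_finset_sum _ (fun b _ => integrable_mono a a b b)).symm
  calc ∑ a, ∑ b, Mo n a a b b
      = ∑ a, ∫ x, ∑ b, X x a * X x a * X x b * X x b ∂(sphereMeasure n) :=
        Finset.sum_congr rfl fun a _ => hin a
    _ = ∫ x, ∑ a, ∑ b, X x a * X x a * X x b * X x b ∂(sphereMeasure n) :=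
        (integral_finset_sum _ (fun a _ => integrable_finset_sum _
          (fun b _ => integrable_mono a a b b))).symm
    _ = ∫ (_ : Metric.sphere (0 : En n) 1), (1:ℝ) ∂(sphereMeasure n) := by
        refine integral_congr_ae (Filter.Eventually.of_forall fun x => ?_)
        have hterm : ∀ a b : Fin n, X x a * X x a * X x b * X x b
            = (X x a * X x a) * (X x b * X x b) := fun a b => by ring
        simp_rw [hterm]
        rw [← Finset.sum_mul_sum, sum_sq_X x, one_mul]
    _ = omegaSphere n := by
        rw [integral_const, smul_eq_mul, mul_one, omegaSphere]
        rfl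

lemma Mo_values {n : ℕ} (hn : 3 ≤ n) :
    (∀ a, Mo n a a a a = 3 * (omegaSphere n / ((n:ℝ) * ((n:ℝ) + 2)))) ∧
      (∀ a b, a ≠ b → Mo n a a b b = omegaSphere n / ((n:ℝ) * ((n:ℝ) + 2))) := by
  have hnn : 0 < n := by omega
  have hn0 : (0:ℝ) < (n:ℝ) := by exact_mod_cast hnn
  set i0 : Fin n := ⟨0, hnn⟩ with hi0
  set A0 : ℝ := Mo n i0 i0 i0 i0 with hA0
  have hAeq : ∀ c : Fin n, Mo n c c c c = A0 := by
    intro c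
    by_cases h : c = i0
    · rw [h]
    · exact (Mo_rot_rel c i0 h).1
  have hBval : ∀ c d : Fin n, c ≠ d → Mo n c c d d = A0 / 3 := by
    intro c d h
    have h1 := (Mo_rot_rel c d h).2
    rw [hAeq c] at h1
    linarith
  have htr := trace_Mo (n := n)
  have hinner : ∀ a : Fin n, ∑ b, Mo n a a b b = A0 + ((n:ℝ) - 1) * (A0 / 3) := by
    intro a
    rw [← Finset.add_sum_erase _ _ (Finset.mem_univ a), hAeq a]
    congr 1
    rw [Finset.sum_congr rfl (fun b hb => hBval a b
      (fun h => (Finset.mem_erase.1 hb).1 h.symm)), Finset.sum_const,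
      Finset.card_erase_of_mem (Finset.mem_univ a), Finset.card_univ, Fintype.card_fin,
      nsmul_eq_mul, Nat.cast_sub (by omega), Nat.cast_one]
  rw [Finset.sum_congr rfl (fun a _ => hinner a), Finset.sum_const, Finset.card_univ,
    Fintype.card_fin, nsmul_eq_mul] at htr
  -- htr : n * (A0 + (n-1) * (A0/3)) = omegaSphere n
  have hval : A0 = 3 * (omegaSphere n / ((n:ℝ) * ((n:ℝ) + 2))) := by
    have hne : (n:ℝ) * ((n:ℝ) + 2) ≠ 0 := by positivity
    field_simp
    nlinarith [htr]
  constructor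
  · intro a; rw [hAeq a, hval]
  · intro a b hab
    rw [hBval a b hab, hval]
    ring

def dl {n : ℕ} (i j : Fin n) : ℝ := if i = j then 1 else 0

lemma dl_self {n : ℕ} (i : Fin n) : dl i i = 1 := if_pos rfl

lemma dl_ne {n : ℕ} {i j : Fin n} (h : i ≠ j) : dl i j = 0 := if_neg h

theorem Mo_formula {n : ℕ} (hn : 3 ≤ n) (a b c d : Fin n) :
    Mo n a b c d = (omegaSphere n / ((n:ℝ) * ((n:ℝ) + 2))) *
      (dl a b * dl c d + dl a c * dl b d + dl a d * dl b c) := by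
  obtain ⟨hA, hB⟩ := Mo_values hn
  by_cases hab : a = b
  · subst hab
    by_cases hcd : c = d
    · subst hcd
      by_cases hac : a = c
      · subst hac
        rw [hA a, dl_self]
        ring
      · rw [hB a c hac]
        simp only [dl_self, dl_ne hac]
        ring
    · have hzero : Mo n a a c d = 0 := by
        by_cases hca : c = a
        · subst hca
          have hda : d ≠ c := fun h => hcd h.symm
          rw [Mo_congr (a' := d) (b' := c) (c' := c) (d' := c) (fun x => by ring)]
          exact Mo_odd d c c c hda hda hda
        · rw [Mo_congr (a' := c) (b' := a) (c' := a) (d' := d) (fun x => by ring)]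
          exact Mo_odd c a a d hca hca hcd
      have h2 : dl a c * dl a d = 0 := by
        by_cases h1 : a = c
        · have h2' : a ≠ d := fun h => hcd (h1.symm.trans h)
          rw [dl_ne h2', mul_zero]
        · rw [dl_ne h1, zero_mul]
      rw [hzero]
      simp only [dl_self, dl_ne hcd]
      rw [mul_comm (dl a d) (dl a c), h2]
      ring
  · by_cases hcd : c = d
    · subst hcd
      have hzero : Mo n a b c c = 0 := by
        by_cases hac : a = c
        · subst hac
          have hba : b ≠ a := fun h => hab h.symm
          rw [Mo_congr (a' := b) (b' := a) (c' := a) (d' := a) (fun x => by ring)]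
          exact Mo_odd b a a a hba hba hba
        · rw [Mo_congr (a' := a) (b' := c) (c' := c) (d' := b) (fun x => by ring)]
          exact Mo_odd a c c b hac hac hab
      have h2 : dl a c * dl b c = 0 := by
        by_cases h1 : a = c
        · have h2' : b ≠ c := fun h => hab (h ▸ h1 ▸ rfl)
          rw [dl_ne h2', mul_zero]
        · rw [dl_ne h1, zero_mul]
      rw [hzero]
      simp only [dl_self, dl_ne hab]
      rw [h2]
      ring
    · by_cases hac : a = c
      · subst hac
        by_cases hbd : b = d
        · subst hbd
          have hba : b ≠ a := fun h => hab h.symm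
          rw [Mo_congr (a' := a) (b' := a) (c' := b) (d' := b) (fun x => by ring)]
          rw [hB a b hab]
          simp only [dl_self, dl_ne hab, dl_ne hba]
          ring
        · have hba : b ≠ a := fun h => hab h.symm
          have hzero : Mo n a b a d = 0 := by
            rw [Mo_congr (a' := b) (b' := a) (c' := a) (d' := d) (fun x => by ring)]
            exact Mo_odd b a a d hba hba hbd
          rw [hzero]
          simp only [dl_self, dl_ne hab, dl_ne hbd, dl_ne hba]
          ring
      · by_cases had : a = d
        · subst had
          by_cases hbc : b = c
          · subst hbc
            have hba : b ≠ a := fun h => hab h.symm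
            rw [Mo_congr (a' := a) (b' := a) (c' := b) (d' := b) (fun x => by ring)]
            rw [hB a b hab]
            simp only [dl_self, dl_ne hab, dl_ne hba]
            ring
          · have hba : b ≠ a := fun h => hab h.symm
            have hzero : Mo n a b c a = 0 := by
              rw [Mo_congr (a' := b) (b' := a) (c' := c) (d' := a) (fun x => by ring)]
              exact Mo_odd b a c a hba hbc hba
            rw [hzero]
            simp only [dl_ne hab, dl_ne hac, dl_ne hbc]
            ring
        · rw [Mo_odd a b c d hab hac had]
          simp only [dl_ne hab, dl_ne hac, dl_ne had]
          ring

/-! ## Algebraic lemmas -/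

lemma collapse {n : ℕ} (f : Fin n → ℝ) (c : Fin n) : ∑ d, f d * dl c d = f c := by
  simp [dl, mul_ite, mul_one, mul_zero, Finset.sum_ite_eq]

lemma sum_rev {n : ℕ} (f : Fin n → Fin n → Fin n → ℝ) :
    ∑ p, ∑ q, ∑ r, f p q r = ∑ p, ∑ q, ∑ r, f r q p := by
  calc ∑ p, ∑ q, ∑ r, f p q r
      = ∑ q, ∑ p, ∑ r, f p q r := Finset.sum_comm
    _ = ∑ q, ∑ r, ∑ p, f p q r := Finset.sum_congr rfl fun q _ => Finset.sum_comm
    _ = ∑ r, ∑ q, ∑ p, f p q r := Finset.sum_comm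

section algebra

variable {n : ℕ} (W : Fin n → Fin n → Fin n → Fin n → ℝ) (hW : IsWeyl n W) (k l : Fin n)

lemma trace_free (u v : Fin n) (hW : IsWeyl n W) : ∑ a, W u a v a = 0 := by
  obtain ⟨h1, h2, h3, h4, h5⟩ := hW
  have : ∀ a, W u a v a = W a u a v := by
    intro a
    rw [h1 u a v a, h2 a u v a, neg_neg]
  rw [Finset.sum_congr rfl fun a _ => this a]
  exact h4 u v

lemma E1_eq (hW : IsWeyl n W) :
    ∑ p, ∑ a, ∑ c, ∑ b, ∑ d, W k a p b * W p c l d * (dl a b * dl c d) = 0 := by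
  refine Finset.sum_eq_zero fun p _ => ?_
  have step : ∀ a c : Fin n, ∑ b, ∑ d, W k a p b * W p c l d * (dl a b * dl c d)
      = (W k a p a) * (W p c l c) := by
    intro a c
    have hd : ∀ b : Fin n, ∑ d, W k a p b * W p c l d * (dl a b * dl c d)
        = W k a p b * W p c l c * dl a b := by
      intro b
      have : ∀ d : Fin n, W k a p b * W p c l d * (dl a b * dl c d)
          = (W k a p b * W p c l d * dl a b) * dl c d := fun d => by ring
      rw [Finset.sum_congr rfl fun d _ => this d,
        collapse (fun d => W k a p b * W p c l d * dl a b) c]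
    rw [Finset.sum_congr rfl fun b _ => hd b,
      collapse (fun b => W k a p b * W p c l c) a]
  rw [Finset.sum_congr rfl fun a _ => Finset.sum_congr rfl fun c _ => step a c,
    ← Finset.sum_mul_sum, trace_free W k p hW, zero_mul]

lemma E2_eq (hW : IsWeyl n W) :
    ∑ p, ∑ a, ∑ c, ∑ b, ∑ d, W k a p b * W p c l d * (dl a c * dl b d)
      = ∑ p, ∑ q, ∑ r, W k p q r * W l r q p := by
  obtain ⟨h1, h2, h3, h4, h5⟩ := hW
  have step : ∀ p a : Fin n, ∑ c, ∑ b, ∑ d, W k a p b * W p c l d * (dl a c * dl b d)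
      = ∑ b, W k a p b * W l b p a := by
    intro p a
    have hd : ∀ c b : Fin n, ∑ d, W k a p b * W p c l d * (dl a c * dl b d)
        = W k a p b * W p c l b * dl a c := by
      intro c b
      have : ∀ d : Fin n, W k a p b * W p c l d * (dl a c * dl b d)
          = (W k a p b * W p c l d * dl a c) * dl b d := fun d => by ring
      rw [Finset.sum_congr rfl fun d _ => this d,
        collapse (fun d => W k a p b * W p c l d * dl a c) b]
    have hc : ∀ c : Fin n, ∑ b, ∑ d, W k a p b * W p c l d * (dl a c * dl b d)
        = (∑ b, W k a p b * W p c l b) * dl a c := by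
      intro c
      rw [Finset.sum_congr rfl fun b _ => hd c b, ← Finset.sum_mul]
    rw [Finset.sum_congr rfl fun c _ => hc c,
      collapse (fun c => ∑ b, W k a p b * W p c l b) a]
    exact Finset.sum_congr rfl fun b _ => by rw [h3 p a l b]
  rw [Finset.sum_congr rfl fun p _ => Finset.sum_congr rfl fun a _ => step p a]
  exact Finset.sum_comm

lemma E3_eq (hW : IsWeyl n W) :
    ∑ p, ∑ a, ∑ c, ∑ b, ∑ d, W k a p b * W p c l d * (dl a d * dl b c)
      = ∑ p, ∑ q, ∑ r, W k p q r * W l p q r := by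
  obtain ⟨h1, h2, h3, h4, h5⟩ := hW
  have step : ∀ p a : Fin n, ∑ c, ∑ b, ∑ d, W k a p b * W p c l d * (dl a d * dl b c)
      = ∑ b, W k a p b * W l a p b := by
    intro p a
    have hd : ∀ c b : Fin n, ∑ d, W k a p b * W p c l d * (dl a d * dl b c)
        = W k a p b * W p c l a * dl b c := by
      intro c b
      have : ∀ d : Fin n, W k a p b * W p c l d * (dl a d * dl b c)
          = (W k a p b * W p c l d * dl b c) * dl a d := fun d => by ring
      rw [Finset.sum_congr rfl fun d _ => this d,
        collapse (fun d => W k a p b * W p c l d * dl b c) a]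
    rw [Finset.sum_congr rfl fun c _ => Finset.sum_congr rfl fun b _ => hd c b]
    rw [Finset.sum_comm]
    have hb : ∀ b : Fin n, ∑ c, W k a p b * W p c l a * dl b c = W k a p b * W p b l a :=
      fun b => collapse (fun c => W k a p b * W p c l a) b
    rw [Finset.sum_congr rfl fun b _ => hb b]
    exact Finset.sum_congr rfl fun b _ => by rw [h3 p b l a]
  rw [Finset.sum_congr rfl fun p _ => Finset.sum_congr rfl fun a _ => step p a]
  exact Finset.sum_comm

lemma Tkl_expand (hW : IsWeyl n W) :
    Tkl n W k l = 2 * (∑ p, ∑ q, ∑ r, W k p q r * W l p q r)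
      + 2 * (∑ p, ∑ q, ∑ r, W k p q r * W l r q p) := by
  unfold Tkl
  have expand : ∀ p q r : Fin n, (W k p q r + W k r q p) * (W l p q r + W l r q p)
      = W k p q r * W l p q r + W k p q r * W l r q p + W k r q p * W l p q r
        + W k r q p * W l r q p := fun p q r => by ring
  rw [Finset.sum_congr rfl fun p _ => Finset.sum_congr rfl fun q _ =>
    Finset.sum_congr rfl fun r _ => expand p q r]
  simp only [Finset.sum_add_distrib]
  rw [sum_rev (fun p q r => W k r q p * W l p q r), sum_rev (fun p q r => W k r q p * W l r q p)]
  ring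

end algebra

lemma integral_sum5 {n : ℕ}
    (f : Fin n → Fin n → Fin n → Fin n → Fin n → Metric.sphere (0 : En n) 1 → ℝ)
    (hf : ∀ p a c b d, Integrable (f p a c b d) (sphereMeasure n)) :
    ∫ x, ∑ p, ∑ a, ∑ c, ∑ b, ∑ d, f p a c b d x ∂(sphereMeasure n)
      = ∑ p, ∑ a, ∑ c, ∑ b, ∑ d, ∫ x, f p a c b d x ∂(sphereMeasure n) := by
  have i1 : ∀ p a c b, Integrable (fun x => ∑ d, f p a c b d x) (sphereMeasure n) :=
    fun p a c b => integrable_finset_sum _ fun d _ => hf p a c b d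
  have i2 : ∀ p a c, Integrable (fun x => ∑ b, ∑ d, f p a c b d x) (sphereMeasure n) :=
    fun p a c => integrable_finset_sum _ fun b _ => i1 p a c b
  have i3 : ∀ p a, Integrable (fun x => ∑ c, ∑ b, ∑ d, f p a c b d x) (sphereMeasure n) :=
    fun p a => integrable_finset_sum _ fun c _ => i2 p a c
  have i4 : ∀ p, Integrable (fun x => ∑ a, ∑ c, ∑ b, ∑ d, f p a c b d x) (sphereMeasure n) :=
    fun p => integrable_finset_sum _ fun a _ => i3 p a
  rw [integral_finset_sum _ fun p _ => i4 p]
  refine Finset.sum_congr rfl fun p _ => ?_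
  rw [integral_finset_sum _ fun a _ => i3 p a]
  refine Finset.sum_congr rfl fun a _ => ?_
  rw [integral_finset_sum _ fun c _ => i2 p a c]
  refine Finset.sum_congr rfl fun c _ => ?_
  rw [integral_finset_sum _ fun b _ => i1 p a c b]
  refine Finset.sum_congr rfl fun b _ => ?_
  rw [integral_finset_sum _ fun d _ => hf p a c b d]

lemma Mo_alt {n : ℕ} (a b c d : Fin n) :
    (∫ x, (X x a * X x b) * (X x c * X x d) ∂(sphereMeasure n)) = Mo n a b c d := by
  unfold Mo
  congr 1
  funext x
  ring

theorem stmt11 (n : ℕ) (hn : 3 ≤ n) (W : Fin n → Fin n → Fin n → Fin n → ℝ)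
    (hWeyl : IsWeyl n W) (k l : Fin n) :
    (∫ x : Metric.sphere (0 : En n) 1,
        ∑ p, hW n W (x : En n) k p * hW n W (x : En n) p l ∂(sphereMeasure n)) =
      omegaSphere n / (18 * (n : ℝ) * ((n : ℝ) + 2)) * Tkl n W k l := by
  have hn0 : (0:ℝ) < (n:ℝ) := by
    have : 0 < n := by omega
    exact_mod_cast this
  set K : ℝ := omegaSphere n / ((n:ℝ) * ((n:ℝ) + 2)) with hK
  have hpt : ∀ x : Metric.sphere (0 : En n) 1,
      (∑ p, hW n W (x : En n) k p * hW n W (x : En n) p l)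
      = ∑ p, ∑ a, ∑ c, ∑ b, ∑ d,
          ((1/9) * (W k a p b * W p c l d)) * ((X x a * X x b) * (X x c * X x d)) := by
    intro x
    refine Finset.sum_congr rfl fun p _ => ?_
    show ((1:ℝ) / 3 * ∑ a, ∑ b, W k a p b * X x a * X x b)
        * ((1:ℝ) / 3 * ∑ c, ∑ d, W p c l d * X x c * X x d) = _
    rw [show ∀ S T : ℝ, (1/3 * S) * (1/3 * T) = 1/9 * (S * T) from fun S T => by ring]
    rw [Finset.sum_mul_sum, Finset.mul_sum]
    refine Finset.sum_congr rfl fun a _ => ?_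
    rw [Finset.mul_sum]
    refine Finset.sum_congr rfl fun c _ => ?_
    rw [Finset.sum_mul_sum, Finset.mul_sum]
    refine Finset.sum_congr rfl fun b _ => ?_
    rw [Finset.mul_sum]
    refine Finset.sum_congr rfl fun d _ => ?_
    ring
  calc (∫ x : Metric.sphere (0 : En n) 1,
        ∑ p, hW n W (x : En n) k p * hW n W (x : En n) p l ∂(sphereMeasure n))
      = ∫ x, ∑ p, ∑ a, ∑ c, ∑ b, ∑ d,
          ((1/9) * (W k a p b * W p c l d)) * ((X x a * X x b) * (X x c * X x d))
          ∂(sphereMeasure n) :=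
        congrArg (MeasureTheory.integral (sphereMeasure n)) (funext hpt)
    _ = ∑ p, ∑ a, ∑ c, ∑ b, ∑ d, ∫ x,
          ((1/9) * (W k a p b * W p c l d)) * ((X x a * X x b) * (X x c * X x d))
          ∂(sphereMeasure n) :=
        integral_sum5 _ (fun p a c b d =>
          (integrable_cont _ (((continuous_X a).mul (continuous_X b)).mul
            ((continuous_X c).mul (continuous_X d)))).const_mul _)
    _ = ∑ p, ∑ a, ∑ c, ∑ b, ∑ d,
          ((1/9) * (W k a p b * W p c l d)) * Mo n a b c d := by
        refine Finset.sum_congr rfl fun p _ => Finset.sum_congr rfl fun a _ =>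
          Finset.sum_congr rfl fun c _ => Finset.sum_congr rfl fun b _ =>
          Finset.sum_congr rfl fun d _ => ?_
        rw [integral_const_mul, Mo_alt]
    _ = ∑ p, ∑ a, ∑ c, ∑ b, ∑ d,
          ((K/9) * (W k a p b * W p c l d * (dl a b * dl c d))
            + (K/9) * (W k a p b * W p c l d * (dl a c * dl b d))
            + (K/9) * (W k a p b * W p c l d * (dl a d * dl b c))) := by
        refine Finset.sum_congr rfl fun p _ => Finset.sum_congr rfl fun a _ =>
          Finset.sum_congr rfl fun c _ => Finset.sum_congr rfl fun b _ =>
          Finset.sum_congr rfl fun d _ => ?_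
        rw [Mo_formula hn a b c d, ← hK]
        ring
    _ = (K/9) * (∑ p, ∑ a, ∑ c, ∑ b, ∑ d, W k a p b * W p c l d * (dl a b * dl c d))
        + (K/9) * (∑ p, ∑ a, ∑ c, ∑ b, ∑ d, W k a p b * W p c l d * (dl a c * dl b d))
        + (K/9) * (∑ p, ∑ a, ∑ c, ∑ b, ∑ d, W k a p b * W p c l d * (dl a d * dl b c)) := by
        simp only [Finset.sum_add_distrib, ← Finset.mul_sum]
    _ = omegaSphere n / (18 * (n : ℝ) * ((n : ℝ) + 2)) * Tkl n W k l := by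
        rw [E1_eq W k l hWeyl, E2_eq W k l hWeyl, E3_eq W k l hWeyl, Tkl_expand W k l hWeyl, hK]
        have h1 : (n:ℝ) ≠ 0 := ne_of_gt hn0
        have h2 : (n:ℝ) + 2 ≠ 0 := by positivity
        field_simp
        ring
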